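/- Let y be a B-valued circular element in a B-valued *-noncommutative probability space. Then for all n,m,k ≥ 0: E((yy*)^n (y*y)^m (yy*)^k) = E((yy*)^n E((y*y)^m) (yy*)^k). -/

import Mathlib

open scoped BigOperators
set_option linter.unusedSectionVars false
set_option maxHeartbeats 1000000

/-- The word `y^{ε(1)} b₁ ⋯ y^{ε(n)} bₙ` encoded by a list of pairs
`(ε(j), bⱼ)`, where `true` stands for `y` and `false` for `y*`. -/
noncomputable def cword {A : Type*} [Monoid A] [StarMul A]
    (y : A) (l : List (Bool × A)) : A :=
  (l.map fun p => (if p.1 then y else star y) * p.2).prod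

/-- `y` is B-valued circular with second-order cumulant maps
`β true = β_{(1,2)}`, `β false = β_{(2,1)}`. -/
def IsCircularWith {A : Type*} [Ring A] [StarRing A] [Algebra ℂ A] [StarModule ℂ A]
    (B : StarSubalgebra ℂ A) (E : A →ₗ[ℂ] A)
    (y : A) (β : Bool → A →ₗ[ℂ] A) : Prop :=
  ∀ (ε : Bool) (b : A), b ∈ B → ∀ l : List (Bool × A), (∀ q ∈ l, q.2 ∈ B) →
    E (cword y ((ε, b) :: l)) =
      ∑ j : Fin l.length,
        if (l.get j).1 ≠ ε then
          β ε (b * E (cword y (l.take (j : ℕ)))) * (l.get j).2 *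
            E (cword y (l.drop ((j : ℕ) + 1)))
        else 0


def sgn (p m i : ℕ) : Bool := decide ((i+p) % 2 = 0 ↔ ¬(p ≤ i ∧ i < p+2*m))

lemma sgn_congr {p m i p' m' i' : ℕ} (h1 : (i+p)%2 = (i'+p')%2)
    (h2 : (p ≤ i ∧ i < p+2*m) ↔ (p' ≤ i' ∧ i' < p'+2*m')) :
    sgn p m i = sgn p' m' i' := by
  unfold sgn; exact decide_eq_decide.mpr (by omega)

def Lf (A : Type*) [One A] (p m : ℕ) (i : ℕ) : Bool × A := (sgn p m i, 1)

def Rf (A : Type*) [One A] (γ : A) (p : ℕ) (i : ℕ) : Bool × A :=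
  (sgn p 0 i, if i = p-1 then γ else 1)

noncomputable def Llist (A : Type*) [One A] (p m q : ℕ) : List (Bool × A) :=
  (List.range (p+2*m+q)).map (Lf A p m)

noncomputable def Rlist (A : Type*) [One A] (γ : A) (p q : ℕ) : List (Bool × A) :=
  (List.range (p+q)).map (Rf A γ p)

section words
variable {A : Type*} [Monoid A] [StarMul A] (y : A)

@[simp] lemma Lf_fst (p m i : ℕ) : (Lf A p m i).1 = sgn p m i := rfl
@[simp] lemma Lf_snd (p m i : ℕ) : (Lf A p m i).2 = 1 := rfl
@[simp] lemma Rf_fst (γ : A) (p i : ℕ) : (Rf A γ p i).1 = sgn p 0 i := rfl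
lemma Rf_snd (γ : A) (p i : ℕ) : (Rf A γ p i).2 = if i = p-1 then γ else 1 := rfl

lemma Llist_eq (p m q n : ℕ) (h : p+2*m+q = n) :
    Llist A p m q = (List.range n).map (Lf A p m) := by subst h; rfl

lemma Rlist_eq (γ : A) (p q n : ℕ) (h : p+q = n) :
    Rlist A γ p q = (List.range n).map (Rf A γ p) := by subst h; rfl

lemma cword_nil : cword y ([] : List (Bool × A)) = 1 := rfl

lemma cword_Llist_zero : cword y (Llist A 0 0 0) = 1 := rfl

lemma cword_append (l₁ l₂ : List (Bool × A)) :
    cword y (l₁ ++ l₂) = cword y l₁ * cword y l₂ := by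
  simp [cword]

lemma range_map_ext (n : ℕ) (f g : ℕ → Bool × A) (h : ∀ i < n, f i = g i) :
    (List.range n).map f = (List.range n).map g :=
  List.map_congr_left (fun i hi => h i (List.mem_range.mp hi))

lemma Lf_ext {p m p' m' i i' : ℕ} (h1 : (i+p)%2 = (i'+p')%2)
    (h2 : (p ≤ i ∧ i < p+2*m) ↔ (p' ≤ i' ∧ i' < p'+2*m')) :
    Lf A p m i = Lf A p' m' i' := by
  unfold Lf; rw [sgn_congr h1 h2]

lemma cword_range_split (a b : ℕ) (f : ℕ → Bool × A) :
    cword y ((List.range (a+b)).map f) =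
      cword y ((List.range a).map f) * cword y ((List.range b).map (fun i => f (a+i))) := by
  rw [List.range_add, List.map_append, cword_append, List.map_map]
  rfl

lemma cword_Llist_split (p m q : ℕ) :
    cword y (Llist A p m q) =
      cword y (Llist A p 0 0) * cword y (Llist A 0 m 0) * cword y (Llist A 0 0 q) := by
  rw [Llist_eq p m q (p+(2*m+q)) (by ring), cword_range_split, cword_range_split,
    ← mul_assoc, Llist_eq p 0 0 p (by ring), Llist_eq 0 m 0 (2*m) (by ring),
    Llist_eq 0 0 q q (by ring)]
  rw [range_map_ext (A := A) p (Lf A p m) (Lf A p 0) (fun i hi => Lf_ext (by omega) (by omega)),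
    range_map_ext (A := A) (2*m) (fun i => Lf A p m (p+i)) (Lf A 0 m)
      (fun i hi => Lf_ext (by omega) (by omega)),
    range_map_ext (A := A) q (fun i => Lf A p m (p+(2*m+i))) (Lf A 0 0)
      (fun i hi => Lf_ext (by omega) (by omega))]

lemma cword_Rlist_split (γ : A) (p q : ℕ) (hp : 1 ≤ p) :
    cword y (Rlist A γ p q) =
      cword y (Llist A p 0 0) * γ * cword y (Llist A 0 0 q) := by
  rw [Rlist_eq γ p q (p+q) rfl, cword_range_split]
  have hsec : cword y ((List.range q).map (fun i => Rf A γ p (p+i)))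
      = cword y (Llist A 0 0 q) := by
    rw [Llist_eq 0 0 q q (by ring),
      range_map_ext (A := A) q (fun i => Rf A γ p (p+i)) (Lf A 0 0) (fun i hi => by
        simp only [Rf, Lf]
        rw [if_neg (by omega),
          sgn_congr (p' := 0) (m' := 0) (i' := i) (by omega) (by omega)])]
  rw [hsec]
  have hfst : cword y ((List.range p).map (Rf A γ p))
      = cword y (Llist A p 0 0) * γ := by
    obtain ⟨p', rfl⟩ : ∃ p', p = p' + 1 := ⟨p-1, by omega⟩
    rw [Llist_eq (p'+1) 0 0 (p'+1) (by ring),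
      List.range_succ, List.map_append, List.map_append, cword_append, cword_append]
    rw [range_map_ext (A := A) p' (Rf A γ (p'+1)) (Lf A (p'+1) 0) (fun i hi => by
      simp only [Rf, Lf]; rw [if_neg (by omega)])]
    simp [cword, Rf, Lf, mul_assoc]
  rw [hfst]

lemma cword_Llist_twopow (k : ℕ) : cword y (Llist A 0 0 (2*k)) = (y * star y)^k := by
  induction k with
  | zero => simp [Llist, cword]
  | succ k ih =>
    rw [Llist_eq 0 0 (2*(k+1)) (2+2*k) (by ring), cword_range_split]
    have h1 : cword y ((List.range 2).map (Lf A 0 0)) = y * star y := by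
      simp [cword, List.range_succ, Lf, show sgn 0 0 0 = true from by decide,
        show sgn 0 0 1 = false from by decide]
    have h2 : cword y ((List.range (2*k)).map (fun i => Lf A 0 0 (2+i)))
        = (y * star y)^k := by
      rw [← ih, Llist_eq 0 0 (2*k) (2*k) (by ring),
        range_map_ext (A := A) (2*k) (fun i => Lf A 0 0 (2+i)) (Lf A 0 0)
          (fun i hi => Lf_ext (by omega) (by omega))]
    rw [h1, h2, pow_succ']

lemma cword_Llist_mid (m : ℕ) : cword y (Llist A 0 m 0) = (star y * y)^m := by
  induction m with
  | zero => simp [Llist, cword]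
  | succ m ih =>
    rw [Llist_eq 0 (m+1) 0 (2+2*m) (by ring), cword_range_split]
    have h1 : cword y ((List.range 2).map (Lf A 0 (m+1))) = star y * y := by
      have ha : sgn 0 (m+1) 0 = false := decide_eq_false (by omega)
      have hb : sgn 0 (m+1) 1 = true := decide_eq_true (by omega)
      simp [cword, List.range_succ, Lf, ha, hb]
    have h2 : cword y ((List.range (2*m)).map (fun i => Lf A 0 (m+1) (2+i)))
        = (star y * y)^m := by
      rw [← ih, Llist_eq 0 m 0 (2*m) (by ring),
        range_map_ext (A := A) (2*m) (fun i => Lf A 0 (m+1) (2+i)) (Lf A 0 m)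
          (fun i hi => Lf_ext (by omega) (by omega))]
    rw [h1, h2, pow_succ']

lemma cword_Llist_pre (n : ℕ) : cword y (Llist A (2*n) 0 0) = (y * star y)^n := by
  rw [← cword_Llist_twopow (A := A) y n, Llist_eq (2*n) 0 0 (2*n) (by ring),
    Llist_eq 0 0 (2*n) (2*n) (by ring),
    range_map_ext (A := A) (2*n) (Lf A (2*n) 0) (Lf A 0 0)
      (fun i hi => Lf_ext (by omega) (by omega))]

end words

lemma sgn_ne_iff {p m i p' m' i' : ℕ} :
    sgn p m i ≠ sgn p' m' i' ↔
      ¬((((i+p) % 2 = 0) ↔ ¬(p ≤ i ∧ i < p+2*m)) ↔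
        (((i'+p') % 2 = 0) ↔ ¬(p' ≤ i' ∧ i' < p'+2*m'))) := by
  unfold sgn; rw [ne_eq, decide_eq_decide]

lemma sum_match {M : Type*} [AddCommMonoid M] (F G : ℕ → M) (a b c : ℕ)
    (hmid : ∀ j, a ≤ j → j < a + b → F j = 0)
    (hhead : ∀ j, j < a → F j = G j)
    (htail : ∀ j, j < c → F (a+(b+j)) = G (a+j)) :
    ∑ i ∈ Finset.range (a+(b+c)), F i = ∑ i ∈ Finset.range (a+c), G i := by
  rw [Finset.sum_range_add, Finset.sum_range_add, Finset.sum_range_add,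
    Finset.sum_eq_zero (fun i hi => hmid (a+i) (by omega)
      (by have := Finset.mem_range.mp hi; omega)), zero_add]
  exact congrArg₂ (· + ·)
    (Finset.sum_congr rfl (fun i hi => hhead i (Finset.mem_range.mp hi)))
    (Finset.sum_congr rfl (fun i hi => htail i (Finset.mem_range.mp hi)))

lemma sum_match0 {M : Type*} [AddCommMonoid M] (F G : ℕ → M) (a b : ℕ)
    (htail : ∀ j, a ≤ j → j < a + b → F j = 0)
    (hhead : ∀ j, j < a → F j = G j) :
    ∑ i ∈ Finset.range (a+b), F i = ∑ i ∈ Finset.range a, G i := by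
  rw [Finset.sum_range_add,
    Finset.sum_eq_zero (fun i hi => htail (a+i) (by omega)
      (by have := Finset.mem_range.mp hi; omega)), add_zero]
  exact Finset.sum_congr rfl (fun i hi => hhead i (Finset.mem_range.mp hi))

section main
variable {A : Type*} [Ring A] [StarRing A] [Algebra ℂ A] [StarModule ℂ A]
    (B : StarSubalgebra ℂ A) (E : A →ₗ[ℂ] A) (y : A) (β : Bool → A →ₗ[ℂ] A)

lemma expand (hcirc : IsCircularWith B E y β)
    (f : ℕ → Bool × A) (hf : ∀ i, (f i).2 ∈ B) (N : ℕ) :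
    E (cword y ((List.range (N+1)).map f)) =
      ∑ i ∈ Finset.range N,
        if (f (i+1)).1 ≠ (f 0).1 then
          β (f 0).1 ((f 0).2 * E (cword y ((List.range i).map (fun t => f (t+1))))) *
            (f (i+1)).2 *
            E (cword y ((List.range (N-(i+1))).map (fun t => f (t+(i+2))))) else 0 := by
  set l : List (Bool × A) := (List.range N).map (fun t => f (t+1)) with hl
  have hmem : ∀ q ∈ l, q.2 ∈ B := by
    intro q hq
    rw [hl, List.mem_map] at hq
    obtain ⟨t, _, rfl⟩ := hq
    exact hf _
  have hword : (List.range (N+1)).map f = ((f 0).1, (f 0).2) :: l := by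
    rw [List.range_succ_eq_map, List.map_cons, hl, List.map_map]
    rfl
  have hlen : l.length = N := by simp [hl]
  have hget : ∀ (j : ℕ) (h : j < l.length), l.get ⟨j, h⟩ = f (j+1) := by
    intro j h
    simp [hl, List.get_eq_getElem]
  have htake : ∀ j < N, l.take j = (List.range j).map (fun t => f (t+1)) := by
    intro j hj
    rw [hl, ← List.map_take, List.take_range, Nat.min_eq_left (le_of_lt hj)]
  have hdrop : ∀ j < N, l.drop (j+1) = (List.range (N-(j+1))).map (fun t => f (t+(j+2))) := by
    intro j hj
    have hr : (List.range N).drop (j+1) = (List.range (N-(j+1))).map (fun t => (j+1)+t) := by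
      conv_lhs => rw [show N = (j+1)+(N-(j+1)) by omega, List.range_add]
      exact List.drop_left' (by simp)
    rw [hl, ← List.map_drop, hr, List.map_map]
    apply List.map_congr_left
    intro t _
    show f (j+1+t+1) = f (t+(j+2))
    congr 1
    omega
  rw [hword, hcirc (f 0).1 (f 0).2 (hf 0) l hmem]
  have step : ∀ j : Fin l.length,
      (if (l.get j).1 ≠ (f 0).1 then
        β (f 0).1 ((f 0).2 * E (cword y (l.take (j : ℕ)))) * (l.get j).2 *
          E (cword y (l.drop ((j : ℕ) + 1))) else 0)
      = (fun i => if (f (i+1)).1 ≠ (f 0).1 then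
          β (f 0).1 ((f 0).2 * E (cword y ((List.range i).map (fun t => f (t+1))))) *
            (f (i+1)).2 *
            E (cword y ((List.range (N-(i+1))).map (fun t => f (t+(i+2))))) else 0) (j : ℕ) := by
    intro j
    have hjN : (j : ℕ) < N := hlen ▸ j.2
    rw [hget _ j.2, htake _ hjN, hdrop _ hjN]
  rw [Finset.sum_congr rfl (fun j _ => step j)]
  refine (Fin.sum_univ_eq_sum_range (fun i => if (f (i+1)).1 ≠ (f 0).1 then
          β (f 0).1 ((f 0).2 * E (cword y ((List.range i).map (fun t => f (t+1))))) *
            (f (i+1)).2 *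
            E (cword y ((List.range (N-(i+1))).map (fun t => f (t+(i+2))))) else 0)
    l.length).trans (by rw [hlen])

lemma odd_vanish (hcirc : IsCircularWith B E y β) :
    ∀ N : ℕ, ∀ l : List (Bool × A), l.length = N → (∀ q ∈ l, q.2 ∈ B) →
      N % 2 = 1 → E (cword y l) = 0 := by
  intro N
  induction N using Nat.strong_induction_on with
  | _ N IH =>
    intro l hlen hmem hodd
    rcases l with _ | ⟨hd, tl⟩
    · simp at hlen; omega
    · have h := hcirc hd.1 hd.2 (hmem hd (by simp)) tl (fun q hq => hmem q (by simp [hq]))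
      rw [show (hd.1, hd.2) = hd from rfl] at h
      rw [h]
      apply Finset.sum_eq_zero
      intro j _
      have hjlt : (j : ℕ) < tl.length := j.2
      have htl : tl.length = N - 1 := by simp at hlen; omega
      by_cases hpar : (j : ℕ) % 2 = 1
      · have hz : E (cword y (tl.take (j : ℕ))) = 0 := by
          apply IH (tl.take (j : ℕ)).length (by simp [List.length_take]; omega) _ rfl
            (fun q hq => hmem q (by simp [List.mem_cons, List.take_subset _ _ hq]))
          simp [List.length_take]; omega
        simp [hz]
      · have hz : E (cword y (tl.drop ((j : ℕ)+1))) = 0 := by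
          apply IH (tl.drop ((j : ℕ)+1)).length (by simp [List.length_drop]; omega) _ rfl
            (fun q hq => hmem q (by simp [List.mem_cons, List.drop_subset _ _ hq]))
          simp [List.length_drop]; omega
        simp [hz]

lemma oddvan (hcirc : IsCircularWith B E y β)
    (f : ℕ → Bool × A) (hf : ∀ i, (f i).2 ∈ B) (j : ℕ) (hj : j % 2 = 1) :
    E (cword y ((List.range j).map f)) = 0 :=
  odd_vanish B E y β hcirc j ((List.range j).map f) (by simp)
    (fun q hq => by obtain ⟨t, _, rfl⟩ := List.mem_map.mp hq; exact hf t) hj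

lemma claim (hErange : ∀ a : A, E a ∈ B) (hEid : ∀ b ∈ B, E b = b)
    (hEbimod : ∀ a : A, ∀ b₁ ∈ B, ∀ b₂ ∈ B, E (b₁ * a * b₂) = b₁ * E a * b₂)
    (hcirc : IsCircularWith B E y β) :
    ∀ N p m q : ℕ, p+2*m+q = N → (p+q) % 2 = 0 →
      E (cword y (Llist A p m q)) =
        E (cword y (Llist A p 0 0) * E (cword y (Llist A 0 m 0)) * cword y (Llist A 0 0 q)) := by
  intro N
  induction N using Nat.strong_induction_on with
  | _ N IH =>
  intro p m q hN hpq
  have hB1 : (1:A) ∈ B := one_mem B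
  have hswallow : ∀ b c : A, b ∈ B → E (b * c) = b * E c := by
    intro b c hb
    have := hEbimod c b hb 1 hB1
    simpa using this
  by_cases hm : m = 0
  · subst hm
    rw [cword_Llist_zero, hEid 1 hB1, mul_one, cword_Llist_split y p 0 q, cword_Llist_zero,
      mul_one]
  by_cases hp : p = 0
  · -- p = 0 case
    subst hp
    have e1 := expand B E y β hcirc (Lf A 0 m) (fun i => hB1) ((2*m-1)+q)
    rw [← Llist_eq 0 m q (((2*m-1)+q)+1) (by omega)] at e1
    have e2 := expand B E y β hcirc (Lf A 0 m) (fun i => hB1) (2*m-1)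
    rw [← Llist_eq 0 m 0 ((2*m-1)+1) (by omega)] at e2
    rw [cword_Llist_zero, one_mul, hswallow _ _ (hErange _), e1, e2, Finset.sum_mul]
    refine sum_match0 _ _ (2*m-1) q ?_ ?_
    · -- tail vanishes
      intro j hj1 hj2
      simp only [Lf_fst, Lf_snd, one_mul, mul_one]
      by_cases hc : sgn 0 m (j+1) = sgn 0 m 0
      · rw [if_neg (fun h => h hc)]
      · have hx := sgn_ne_iff.mp hc
        have hpar : j % 2 = 1 := by omega
        rw [if_pos hc,
          oddvan B E y β hcirc (fun t => Lf A 0 m (t+1)) (fun t => hB1) j hpar]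
        simp
    · -- head matches
      intro j hj
      simp only [Lf_fst, Lf_snd, one_mul, mul_one]
      by_cases hc : sgn 0 m (j+1) = sgn 0 m 0
      · rw [if_neg (fun h => h hc), if_neg (fun h => h hc), zero_mul]
      · have hx := sgn_ne_iff.mp hc
        have hpar : j % 2 = 0 := by omega
        rw [if_pos hc, if_pos hc]
        obtain ⟨d, hd⟩ : ∃ d, j = 2*d := ⟨j/2, by omega⟩
        have hdL : (List.range ((2*m-1)+q-(j+1))).map (fun t => Lf A 0 m (t+(j+2)))
            = Llist A 0 (m-(d+1)) q := by
          rw [Llist_eq 0 (m-(d+1)) q ((2*m-1)+q-(j+1)) (by omega)]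
          exact range_map_ext _ _ _ (fun t ht => Lf_ext (by omega) (by omega))
        have hdV : (List.range ((2*m-1)-(j+1))).map (fun t => Lf A 0 m (t+(j+2)))
            = Llist A 0 (m-(d+1)) 0 := by
          rw [Llist_eq 0 (m-(d+1)) 0 ((2*m-1)-(j+1)) (by omega)]
          exact range_map_ext _ _ _ (fun t ht => Lf_ext (by omega) (by omega))
        rw [hdL, hdV]
        have hIH := IH (0+2*(m-(d+1))+q) (by omega) 0 (m-(d+1)) q rfl (by omega)
        rw [cword_Llist_zero, one_mul, hswallow _ _ (hErange _)] at hIH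
        rw [hIH, ← mul_assoc]
  · -- p ≥ 1 case
    have hp1 : 1 ≤ p := by omega
    have e1 := expand B E y β hcirc (Lf A p m) (fun i => hB1) ((p-1)+(2*m+q))
    rw [← Llist_eq p m q (((p-1)+(2*m+q))+1) (by omega)] at e1
    rw [← cword_Rlist_split y (E (cword y (Llist A 0 m 0))) p q hp1]
    set γ : A := E (cword y (Llist A 0 m 0)) with hγdef
    have hγB : γ ∈ B := hErange _
    have hfR : ∀ i, (Rf A γ p i).2 ∈ B := by
      intro i
      rw [Rf_snd]
      split
      · exact hγB
      · exact hB1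
    have e2 := expand B E y β hcirc (Rf A γ p) hfR ((p-1)+q)
    rw [← Rlist_eq γ p q (((p-1)+q)+1) (by omega)] at e2
    rw [e1, e2]
    refine sum_match _ _ (p-1) (2*m) q ?_ ?_ ?_
    · -- middle vanishes
      intro j hj1 hj2
      simp only [Lf_fst, Lf_snd, one_mul, mul_one]
      by_cases hc : sgn p m (j+1) = sgn p m 0
      · rw [if_neg (fun h => h hc)]
      · have hx := sgn_ne_iff.mp hc
        have hpar : j % 2 = 1 := by omega
        rw [if_pos hc,
          oddvan B E y β hcirc (fun t => Lf A p m (t+1)) (fun t => hB1) j hpar]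
        simp
    · -- head matches
      intro j hj
      simp only [Lf_fst, Lf_snd, Rf_fst, one_mul, mul_one]
      rw [show sgn p m (j+1) = sgn p 0 (j+1) from sgn_congr (by omega) (by omega),
        show sgn p m 0 = sgn p 0 0 from sgn_congr (by omega) (by omega)]
      by_cases hc : sgn p 0 (j+1) = sgn p 0 0
      · rw [if_neg (fun h => h hc)]; simp only [ne_eq, hc, not_true_eq_false, if_false]
      · have hx := sgn_ne_iff.mp hc
        have hpar : j % 2 = 0 := by omega
        rw [if_pos hc]; simp only [ne_eq, hc, not_false_eq_true, if_true]
        rw [show (Rf A γ p 0).2 = (1:A) from by rw [Rf_snd, if_neg (by omega)], one_mul]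
        rw [show (List.range j).map (fun t => Rf A γ p (t+1))
              = (List.range j).map (fun t => Lf A p m (t+1)) from
            range_map_ext _ _ _ (fun t ht => by
              simp only [Rf, Lf]
              rw [if_neg (by omega),
                sgn_congr (p' := p) (m' := m) (i' := t+1) (by omega) (by omega)])]
        by_cases hj2 : j = p-2
        · -- γ partner
          rw [show (Rf A γ p (j+1)).2 = γ from by rw [Rf_snd, if_pos (by omega)]]
          have hdL : (List.range ((p-1)+(2*m+q)-(j+1))).map (fun t => Lf A p m (t+(j+2)))
              = Llist A 0 m q := by
            rw [Llist_eq 0 m q ((p-1)+(2*m+q)-(j+1)) (by omega)]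
            exact range_map_ext _ _ _ (fun t ht => Lf_ext (by omega) (by omega))
          have hdR : (List.range ((p-1)+q-(j+1))).map (fun t => Rf A γ p (t+(j+2)))
              = Llist A 0 0 q := by
            rw [Llist_eq 0 0 q ((p-1)+q-(j+1)) (by omega)]
            exact range_map_ext _ _ _ (fun t ht => by
              simp only [Rf, Lf]
              rw [if_neg (by omega),
                sgn_congr (p' := 0) (m' := 0) (i' := t) (by omega) (by omega)])
          rw [hdL, hdR]
          have hIH := IH (0+2*m+q) (by omega) 0 m q rfl (by omega)
          rw [cword_Llist_zero, one_mul, ← hγdef, hswallow _ _ hγB] at hIH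
          rw [hIH, ← mul_assoc]
        · -- plain prefix partner
          rw [show (Rf A γ p (j+1)).2 = (1:A) from by rw [Rf_snd, if_neg (by omega)], mul_one]
          have hdL : (List.range ((p-1)+(2*m+q)-(j+1))).map (fun t => Lf A p m (t+(j+2)))
              = Llist A (p-(j+2)) m q := by
            rw [Llist_eq (p-(j+2)) m q ((p-1)+(2*m+q)-(j+1)) (by omega)]
            exact range_map_ext _ _ _ (fun t ht => Lf_ext (by omega) (by omega))
          have hdR : (List.range ((p-1)+q-(j+1))).map (fun t => Rf A γ p (t+(j+2)))
              = Rlist A γ (p-(j+2)) q := by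
            rw [Rlist_eq γ (p-(j+2)) q ((p-1)+q-(j+1)) (by omega)]
            exact range_map_ext _ _ _ (fun t ht => by
              simp only [Rf]
              rw [sgn_congr (p' := p-(j+2)) (m' := 0) (i' := t) (by omega) (by omega),
                if_congr (show t+(j+2) = p-1 ↔ t = p-(j+2)-1 by omega) rfl rfl])
          rw [hdL, hdR]
          have hIH := IH ((p-(j+2))+2*m+q) (by omega) (p-(j+2)) m q rfl (by omega)
          rw [← hγdef, ← cword_Rlist_split y γ (p-(j+2)) q (by omega)] at hIH
          rw [hIH]
    · -- tail matches
      intro j hj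
      simp only [Lf_fst, Lf_snd, Rf_fst, one_mul, mul_one]
      rw [show sgn p m ((p-1)+(2*m+j)+1) = sgn p 0 ((p-1)+j+1) from
          sgn_congr (by omega) (by omega),
        show sgn p m 0 = sgn p 0 0 from sgn_congr (by omega) (by omega)]
      by_cases hc : sgn p 0 ((p-1)+j+1) = sgn p 0 0
      · rw [if_neg (fun h => h hc)]; simp only [ne_eq, hc, not_true_eq_false, if_false]
      · have hx := sgn_ne_iff.mp hc
        have hpar : ((p-1)+j) % 2 = 0 := by omega
        rw [if_pos hc]; simp only [ne_eq, hc, not_false_eq_true, if_true]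
        rw [show (Rf A γ p ((p-1)+j+1)).2 = (1:A) from by rw [Rf_snd, if_neg (by omega)],
          mul_one]
        have hdrop : (List.range ((p-1)+(2*m+q)-((p-1)+(2*m+j)+1))).map
              (fun t => Lf A p m (t+((p-1)+(2*m+j)+2)))
            = (List.range ((p-1)+q-((p-1)+j+1))).map (fun t => Rf A γ p (t+((p-1)+j+2))) := by
          rw [show (p-1)+(2*m+q)-((p-1)+(2*m+j)+1) = (p-1)+q-((p-1)+j+1) by omega]
          exact range_map_ext _ _ _ (fun t ht => by
            simp only [Rf, Lf]
            rw [if_neg (by omega),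
              sgn_congr (p' := p) (m' := 0) (i' := t+((p-1)+j+2)) (by omega) (by omega)])
        rw [hdrop]
        have htkL : (List.range ((p-1)+(2*m+j))).map (fun t => Lf A p m (t+1))
            = Llist A (p-1) m j := by
          rw [Llist_eq (p-1) m j ((p-1)+(2*m+j)) (by omega)]
          exact range_map_ext _ _ _ (fun t ht => Lf_ext (by omega) (by omega))
        rw [htkL]
        by_cases hpone : p = 1
        · -- p = 1 : γ is the head coefficient
          rw [show (Rf A γ p 0).2 = γ from by rw [Rf_snd, if_pos (by omega)]]
          have htkR : (List.range ((p-1)+j)).map (fun t => Rf A γ p (t+1))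
              = Llist A 0 0 j := by
            rw [Llist_eq 0 0 j ((p-1)+j) (by omega)]
            exact range_map_ext _ _ _ (fun t ht => by
              simp only [Rf, Lf]
              rw [if_neg (by omega),
                sgn_congr (p' := 0) (m' := 0) (i' := t) (by omega) (by omega)])
          rw [htkR]
          have hIH := IH (0+2*m+j) (by omega) 0 m j rfl (by omega)
          rw [cword_Llist_zero, one_mul, ← hγdef, hswallow _ _ hγB] at hIH
          have hLj : (List.range ((p-1)+(2*m+j))).map (fun t => Lf A p m (t+1))
              = Llist A 0 m j := by
            rw [Llist_eq 0 m j ((p-1)+(2*m+j)) (by omega)]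
            exact range_map_ext _ _ _ (fun t ht => Lf_ext (by omega) (by omega))
          rw [show Llist A (p-1) m j = Llist A 0 m j from by rw [← htkL, hLj], hIH]
        · -- p ≥ 2
          rw [show (Rf A γ p 0).2 = (1:A) from by rw [Rf_snd, if_neg (by omega)], one_mul]
          have htkR : (List.range ((p-1)+j)).map (fun t => Rf A γ p (t+1))
              = Rlist A γ (p-1) j := by
            rw [Rlist_eq γ (p-1) j ((p-1)+j) (by omega)]
            exact range_map_ext _ _ _ (fun t ht => by
              simp only [Rf]
              rw [sgn_congr (p' := p-1) (m' := 0) (i' := t) (by omega) (by omega),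
                if_congr (show t+1 = p-1 ↔ t = (p-1)-1 by omega) rfl rfl])
          rw [htkR]
          have hIH := IH ((p-1)+2*m+j) (by omega) (p-1) m j rfl (by omega)
          rw [← hγdef, ← cword_Rlist_split y γ (p-1) j (by omega)] at hIH
          rw [hIH]
end main

/-- For a B-valued circular element `y`,
`E((yy*)ⁿ (y*y)ᵐ (yy*)ᵏ) = E((yy*)ⁿ E((y*y)ᵐ) (yy*)ᵏ)`. -/
theorem circular_middle_block_factorization
    {A : Type*} [Ring A] [StarRing A] [Algebra ℂ A] [StarModule ℂ A]
    (B : StarSubalgebra ℂ A) (E : A →ₗ[ℂ] A)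
    (hErange : ∀ a : A, E a ∈ B)
    (hEid : ∀ b ∈ B, E b = b)
    (hEstar : ∀ a : A, E (star a) = star (E a))
    (hEbimod : ∀ a : A, ∀ b₁ ∈ B, ∀ b₂ ∈ B, E (b₁ * a * b₂) = b₁ * E a * b₂)
    (y : A) (β : Bool → A →ₗ[ℂ] A)
    (hcirc : IsCircularWith B E y β) :
    ∀ n m k : ℕ,
      E ((y * star y) ^ n * (star y * y) ^ m * (y * star y) ^ k)
        = E ((y * star y) ^ n * E ((star y * y) ^ m) * (y * star y) ^ k) := by
  intro n m k
  have h := claim B E y β hErange hEid hEbimod hcirc (2*n+2*m+2*k) (2*n) m (2*k)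
    (by ring) (by omega)
  rw [cword_Llist_split y (2*n) m (2*k), cword_Llist_pre, cword_Llist_mid,
    cword_Llist_twopow] at h
  exact h
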